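/- Assume all agents have additive cost functions. Every PMMS allocation is (2n/(n+1))-MMS. Moreover, for every odd n ≥ 5 and every β with 1 ≤ β < (2n+2)/(n+3), there exists an n-agent instance with additive cost functions and a PMMS allocation that is not β-MMS. -/

import Mathlib

open Finset

/-- `T` is a `k`-partition of the bundle `S`: pairwise disjoint bundles whose union is `S`. -/
def IsPartitionOf {E : Type*} [DecidableEq E] {k : ℕ} (T : Fin k → Finset E) (S : Finset E) :
    Prop :=
  (∀ i j : Fin k, i ≠ j → Disjoint (T i) (T j)) ∧ Finset.univ.biUnion T = S

/-- The maximin share of cost function `c` on `S` among `k` agents: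
the minimum over `k`-partitions of `S` of the maximum cost of a bundle. -/
noncomputable def MMS {E : Type*} [DecidableEq E] (c : Finset E → ℝ) (k : ℕ) (S : Finset E) :
    ℝ :=
  sInf { m : ℝ | ∃ T : Fin k → Finset E, IsPartitionOf T S ∧ m = ⨆ j : Fin k, c (T j) }

/-- `c` is a nonnegative additive cost function. -/
def AdditiveCost {E : Type*} [DecidableEq E] (c : Finset E → ℝ) : Prop :=
  (∀ S : Finset E, 0 ≤ c S) ∧ ∀ S : Finset E, c S = ∑ e ∈ S, c {e}

/-- `c` is a nonnegative monotone cost function with `c ∅ = 0`. -/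
def MonotoneCost {E : Type*} (c : Finset E → ℝ) : Prop :=
  (∀ S : Finset E, 0 ≤ c S) ∧ c ∅ = 0 ∧ ∀ ⦃S T : Finset E⦄, S ⊆ T → c S ≤ c T

/-- `c` is subadditive. -/
def SubadditiveCost {E : Type*} [DecidableEq E] (c : Finset E → ℝ) : Prop :=
  ∀ S T : Finset E, c (S ∪ T) ≤ c S + c T

/-- `c` is submodular. -/
def SubmodularCost {E : Type*} [DecidableEq E] (c : Finset E → ℝ) : Prop :=
  ∀ S T : Finset E, c (S ∪ T) + c (S ∩ T) ≤ c S + c T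

/-- `A` is an allocation of all chores among the `n` agents. -/
def IsAllocation {E : Type*} [DecidableEq E] [Fintype E] {n : ℕ} (A : Fin n → Finset E) : Prop :=
  IsPartitionOf A Finset.univ

/-- `A` is `α`-envy-free. -/
def IsEF {E : Type*} {n : ℕ} (α : ℝ) (c : Fin n → Finset E → ℝ) (A : Fin n → Finset E) : Prop :=
  ∀ i j, c i (A i) ≤ α * c i (A j)

/-- `A` is `α`-envy-free up to one item. -/
def IsEF1 {E : Type*} [DecidableEq E] {n : ℕ} (α : ℝ) (c : Fin n → Finset E → ℝ)
    (A : Fin n → Finset E) : Prop :=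
  ∀ i j, i ≠ j → A i = ∅ ∨ ∃ e ∈ A i, c i (A i \ {e}) ≤ α * c i (A j)

/-- `A` is `α`-envy-free up to any (positive-cost) item. -/
def IsEFX {E : Type*} [DecidableEq E] {n : ℕ} (α : ℝ) (c : Fin n → Finset E → ℝ)
    (A : Fin n → Finset E) : Prop :=
  ∀ i j, i ≠ j → ∀ e ∈ A i, 0 < c i {e} → c i (A i \ {e}) ≤ α * c i (A j)

/-- `A` is an `α`-MMS allocation. -/
def IsMMSFair {E : Type*} [DecidableEq E] [Fintype E] {n : ℕ} (α : ℝ)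
    (c : Fin n → Finset E → ℝ) (A : Fin n → Finset E) : Prop :=
  ∀ i, c i (A i) ≤ α * MMS (c i) n Finset.univ

/-- `A` is an `α`-PMMS allocation. -/
def IsPMMS {E : Type*} [DecidableEq E] {n : ℕ} (α : ℝ)
    (c : Fin n → Finset E → ℝ) (A : Fin n → Finset E) : Prop :=
  ∀ i j, i ≠ j → c i (A i) ≤ α * MMS (c i) 2 (A i ∪ A j)

/-- The optimal (minimum) social cost over all allocations. -/
noncomputable def OPT {E : Type*} [DecidableEq E] [Fintype E] {n : ℕ}
    (c : Fin n → Finset E → ℝ) : ℝ :=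
  sInf { s : ℝ | ∃ A : Fin n → Finset E, IsAllocation A ∧ s = ∑ i, c i (A i) }

section helpers

variable {E : Type*} [DecidableEq E] {k : ℕ} {c : Finset E → ℝ} {S : Finset E}

lemma exists_partition (hk : 0 < k) (S : Finset E) :
    ∃ T : Fin k → Finset E, IsPartitionOf T S := by
  refine ⟨fun i => if i.val = 0 then S else ∅, ?_, ?_⟩
  · intro i j hij
    rcases Nat.eq_zero_or_pos i.val with hi | hi
    · have hj : j.val ≠ 0 := by
        intro h; exact hij (Fin.ext (by omega))
      simp [hi, hj]
    · have hi' : i.val ≠ 0 := by omega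
      simp [hi']
  · ext e
    simp only [mem_biUnion, mem_univ, true_and]
    constructor
    · rintro ⟨i, hi⟩
      by_cases h : i.val = 0
      · simpa [h] using hi
      · simp [h] at hi
    · intro he
      exact ⟨⟨0, hk⟩, by simpa using he⟩

lemma sup_bddAbove (f : Fin k → ℝ) : BddAbove (Set.range f) :=
  (Set.finite_range f).bddAbove

lemma mms_set_nonempty (hk : 0 < k) (c : Finset E → ℝ) (S : Finset E) :
    { m : ℝ | ∃ T : Fin k → Finset E, IsPartitionOf T S ∧ m = ⨆ j : Fin k, c (T j) }.Nonempty := by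
  obtain ⟨T, hT⟩ := exists_partition hk S
  exact ⟨_, T, hT, rfl⟩

lemma mms_nonneg (hc : ∀ S : Finset E, 0 ≤ c S) (hk : 0 < k) (S : Finset E) :
    0 ≤ MMS c k S := by
  apply le_csInf (mms_set_nonempty hk c S)
  rintro m ⟨T, hT, rfl⟩
  exact le_trans (hc (T ⟨0, hk⟩)) (le_ciSup (sup_bddAbove fun j => c (T j)) ⟨0, hk⟩)

lemma mms_bddBelow (hc : ∀ S : Finset E, 0 ≤ c S) (hk : 0 < k) (S : Finset E) :
    BddBelow { m : ℝ | ∃ T : Fin k → Finset E, IsPartitionOf T S ∧ m = ⨆ j : Fin k, c (T j) } := by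
  refine ⟨0, ?_⟩
  rintro m ⟨T, hT, rfl⟩
  exact le_trans (hc (T ⟨0, hk⟩)) (le_ciSup (sup_bddAbove fun j => c (T j)) ⟨0, hk⟩)

lemma mms_le_sup (hc : ∀ S : Finset E, 0 ≤ c S) (hk : 0 < k) {T : Fin k → Finset E}
    (hT : IsPartitionOf T S) : MMS c k S ≤ ⨆ j : Fin k, c (T j) :=
  csInf_le (mms_bddBelow hc hk S) ⟨T, hT, rfl⟩

lemma le_mms (hk : 0 < k) {b : ℝ}
    (h : ∀ T : Fin k → Finset E, IsPartitionOf T S → b ≤ ⨆ j : Fin k, c (T j)) :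
    b ≤ MMS c k S := by
  apply le_csInf (mms_set_nonempty hk c S)
  rintro m ⟨T, hT, rfl⟩
  exact h T hT

lemma mms_attained (hk : 0 < k) (c : Finset E → ℝ) (S : Finset E) [Fintype E] :
    ∃ T : Fin k → Finset E, IsPartitionOf T S ∧ MMS c k S = ⨆ j : Fin k, c (T j) := by
  have hfin : { m : ℝ | ∃ T : Fin k → Finset E, IsPartitionOf T S ∧
      m = ⨆ j : Fin k, c (T j) }.Finite := by
    have : { m : ℝ | ∃ T : Fin k → Finset E, IsPartitionOf T S ∧ m = ⨆ j : Fin k, c (T j) }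
        = (fun T : Fin k → Finset E => ⨆ j : Fin k, c (T j)) '' {T | IsPartitionOf T S} := by
      ext m
      simp only [Set.mem_setOf_eq, Set.mem_image]
      exact ⟨fun ⟨T, h1, h2⟩ => ⟨T, h1, h2.symm⟩, fun ⟨T, h1, h2⟩ => ⟨T, h1, h2.symm⟩⟩
    rw [this]
    exact Set.Finite.image _ (Set.toFinite _)
  have := (mms_set_nonempty hk c S).csInf_mem hfin
  obtain ⟨T, hT, hm⟩ := this
  exact ⟨T, hT, hm⟩

end helpers

section additive

variable {E : Type*} [DecidableEq E] {c : Finset E → ℝ}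

lemma AdditiveCost.mono (hc : AdditiveCost c) {S T : Finset E} (h : S ⊆ T) : c S ≤ c T := by
  rw [hc.2 S, hc.2 T]
  exact Finset.sum_le_sum_of_subset_of_nonneg h (fun e _ _ => hc.1 {e})

lemma AdditiveCost.union (hc : AdditiveCost c) {S T : Finset E} (h : Disjoint S T) :
    c (S ∪ T) = c S + c T := by
  rw [hc.2 (S ∪ T), hc.2 S, hc.2 T, Finset.sum_union h]

lemma AdditiveCost.sdiff (hc : AdditiveCost c) {S C : Finset E} (h : C ⊆ S) :
    c (S \ C) = c S - c C := by
  have h1 : (S \ C) ∪ C = S := Finset.sdiff_union_of_subset h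
  have h2 : c ((S \ C) ∪ C) = c (S \ C) + c C := hc.union Finset.sdiff_disjoint
  rw [h1] at h2
  linarith

lemma AdditiveCost.partition_sum (hc : AdditiveCost c) {k : ℕ} {T : Fin k → Finset E}
    {S : Finset E} (hT : IsPartitionOf T S) : ∑ j : Fin k, c (T j) = c S := by
  rw [← hT.2, hc.2 (univ.biUnion T)]
  rw [Finset.sum_biUnion]
  · exact Finset.sum_congr rfl fun j _ => hc.2 (T j)
  · intro i _ j _ hij
    exact hT.1 i j hij

end additive

theorem part1 {E : Type} [DecidableEq E] [Fintype E] {n : ℕ} (hn : 2 ≤ n)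
    (c : Fin n → Finset E → ℝ) (hc : ∀ i, AdditiveCost (c i))
    (A : Fin n → Finset E) (hA : IsPartitionOf A Finset.univ)
    (hP : ∀ i j, i ≠ j → c i (A i) ≤ 1 * MMS (c i) 2 (A i ∪ A j)) :
    ∀ i, c i (A i) ≤ 2 * (n : ℝ) / ((n : ℝ) + 1) * MMS (c i) n Finset.univ := by
  intro i
  have hn0 : 0 < n := by omega
  have hci := hc i
  set x := c i (A i) with hx
  set μ := MMS (c i) n (univ : Finset E) with hμdef
  have hμ0 : 0 ≤ μ := mms_nonneg hci.1 hn0 _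
  have hcoef : (1 : ℝ) ≤ 2 * (n : ℝ) / ((n : ℝ) + 1) := by
    rw [le_div_iff₀ (by positivity)]
    have : (2 : ℝ) ≤ (n : ℝ) := by exact_mod_cast hn
    linarith
  obtain ⟨T, hT, hTμ⟩ := mms_attained (c := c i) (S := (univ : Finset E)) hn0
  have hTk : ∀ k, c i (T k) ≤ μ := by
    intro k
    rw [hμdef, hTμ]
    exact le_ciSup (sup_bddAbove fun j => c i (T j)) k
  -- key claim from PMMS
  have key : ∀ j, j ≠ i → ∀ C ⊆ A i, 0 < c i C → x ≤ c i (A j) + c i C := by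
    intro j hj C hC hCpos
    by_contra hcon
    push_neg at hcon
    set T2 : Fin 2 → Finset E := fun t => if t.val = 0 then A i \ C else C ∪ A j with hT2
    have hAij : Disjoint (A i) (A j) := hA.1 i j (Ne.symm hj)
    have hpart : IsPartitionOf T2 (A i ∪ A j) := by
      constructor
      · intro s t hst
        have hd : Disjoint (A i \ C) (C ∪ A j) := by
          rw [Finset.disjoint_union_right]
          exact ⟨Finset.sdiff_disjoint, Finset.disjoint_of_subset_left (Finset.sdiff_subset) hAij⟩
        rcases Nat.eq_zero_or_pos s.val with hs | hs
        · have ht : t.val ≠ 0 := fun h => hst (Fin.ext (by omega))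
          simp only [hT2, hs, ht, if_true, if_false]
          simpa using hd
        · have hs' : s.val ≠ 0 := by omega
          have ht : t.val = 0 := by omega
          simp only [hT2, hs', ht, if_true, if_false]
          simpa using hd.symm
      · ext e
        simp only [mem_biUnion, mem_univ, true_and]
        constructor
        · rintro ⟨t, ht⟩
          simp only [hT2] at ht
          split_ifs at ht with h
          · exact mem_union_left _ (mem_sdiff.mp ht).1
          · rcases mem_union.mp ht with h' | h'
            · exact mem_union_left _ (hC h')
            · exact mem_union_right _ h'
        · intro he
          rw [mem_union] at he
          by_cases h : e ∈ C
          · exact ⟨1, by simp [hT2, h]⟩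
          · rcases he with he | he
            · exact ⟨0, by simp [hT2, he, h]⟩
            · exact ⟨1, by simp [hT2, he]⟩
    have hval0 : c i (T2 0) < x := by
      simp only [hT2, if_true, Fin.val_zero, if_pos rfl]
      rw [hci.sdiff hC]
      linarith
    have hval1 : c i (T2 1) < x := by
      have : (1 : Fin 2).val = 1 := rfl
      simp only [hT2, this]
      rw [if_neg (by omega)]
      rw [hci.union (Finset.disjoint_of_subset_left hC hAij)]
      linarith
    have hsup : (⨆ t : Fin 2, c i (T2 t)) < x := by
      have hle : (⨆ t : Fin 2, c i (T2 t)) ≤ max (c i (T2 0)) (c i (T2 1)) := by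
        apply ciSup_le
        intro t
        fin_cases t
        · exact le_max_left _ _
        · exact le_max_right _ _
      exact lt_of_le_of_lt hle (max_lt hval0 hval1)
    have hmms := mms_le_sup (S := A i ∪ A j) hci.1 (by omega) hpart
    have := hP i j (Ne.symm hj)
    rw [one_mul] at this
    linarith
  -- chunks
  set C : Fin n → Finset E := fun k => A i ∩ T k with hCdef
  have hchunk_le : ∀ k, c i (C k) ≤ μ := fun k =>
    le_trans (hci.mono (Finset.inter_subset_right)) (hTk k)
  have hsum : ∑ k, c i (C k) = x := by
    have hbi : univ.biUnion C = A i := by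
      ext e
      simp only [hCdef, mem_biUnion, mem_univ, true_and, mem_inter]
      constructor
      · rintro ⟨k, hk, _⟩; exact hk
      · intro he
        have : e ∈ univ.biUnion T := by rw [hT.2]; exact mem_univ e
        rw [mem_biUnion] at this
        obtain ⟨k, _, hk⟩ := this
        exact ⟨k, he, hk⟩
    have hdisj : ∀ s ∈ (univ : Finset (Fin n)), ∀ t ∈ (univ : Finset (Fin n)), s ≠ t →
        Disjoint (C s) (C t) := by
      intro s _ t _ hst
      exact Finset.disjoint_of_subset_left (Finset.inter_subset_right)
        (Finset.disjoint_of_subset_right (Finset.inter_subset_right) (hT.1 s t hst))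
    calc ∑ k, c i (C k) = ∑ k, ∑ e ∈ C k, c i {e} := by
          exact Finset.sum_congr rfl fun k _ => hci.2 (C k)
      _ = ∑ e ∈ univ.biUnion C, c i {e} := (Finset.sum_biUnion hdisj).symm
      _ = x := by rw [hbi, hx, hci.2 (A i)]
  set P : Finset (Fin n) := univ.filter (fun k => 0 < c i (C k)) with hPdef
  have hxP : x = ∑ k ∈ P, c i (C k) := by
    rw [← hsum, ← Finset.sum_filter_add_sum_filter_not univ (fun k => 0 < c i (C k))]
    have : ∑ k ∈ univ.filter (fun k => ¬ 0 < c i (C k)), c i (C k) = 0 := by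
      apply Finset.sum_eq_zero
      intro k hk
      rw [Finset.mem_filter] at hk
      have := hci.1 (C k)
      linarith [hk.2]
    rw [this, add_zero]
  rcases Nat.lt_or_ge P.card 2 with hcard | hcard
  · -- at most one positive chunk : x ≤ μ
    have hxμ : x ≤ μ := by
      rcases (show P.card = 0 ∨ P.card = 1 by omega) with h | h
      · rw [Finset.card_eq_zero] at h
        rw [hxP, h, Finset.sum_empty]
        exact hμ0
      · rw [Finset.card_eq_one] at h
        obtain ⟨k, hk⟩ := h
        rw [hxP, hk, Finset.sum_singleton]
        exact hchunk_le k
    calc x ≤ μ := hxμ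
      _ ≤ 2 * (n : ℝ) / ((n : ℝ) + 1) * μ := le_mul_of_one_le_left hμ0 hcoef
  · -- at least two positive chunks
    obtain ⟨k, l, hk, hl, hkl⟩ := Finset.one_lt_card_iff.mp (show 1 < P.card by omega)
    have hpos : ∀ m ∈ P, 0 < c i (C m) := fun m hm => (Finset.mem_filter.mp hm).2
    have hpair : c i (C k) + c i (C l) ≤ x := by
      rw [hxP]
      have : ({k, l} : Finset (Fin n)) ⊆ P := by
        intro t ht
        rw [Finset.mem_insert, Finset.mem_singleton] at ht
        rcases ht with h | h <;> subst h <;> assumption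
      calc c i (C k) + c i (C l) = ∑ t ∈ ({k, l} : Finset (Fin n)), c i (C t) :=
            (Finset.sum_pair (f := fun t => c i (C t)) hkl).symm
        _ ≤ ∑ t ∈ P, c i (C t) := Finset.sum_le_sum_of_subset_of_nonneg this
            (fun t _ _ => hci.1 (C t))
    -- pick the smaller chunk
    obtain ⟨k₀, hk₀P, hk₀half⟩ : ∃ k₀ ∈ P, 2 * c i (C k₀) ≤ x := by
      rcases le_total (c i (C k)) (c i (C l)) with h | h
      · exact ⟨k, hk, by linarith⟩
      · exact ⟨l, hl, by linarith⟩
    have hk₀pos := hpos k₀ hk₀P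
    have hAj : ∀ j, j ≠ i → x / 2 ≤ c i (A j) := by
      intro j hj
      have := key j hj (C k₀) (Finset.inter_subset_left) hk₀pos
      linarith
    -- total cost bounds
    have htot1 : c i (univ : Finset E) ≤ n * μ := by
      rw [← hci.partition_sum hT]
      calc ∑ k, c i (T k) ≤ ∑ _k : Fin n, μ := Finset.sum_le_sum fun k _ => hTk k
        _ = n * μ := by rw [Finset.sum_const, Finset.card_univ, Fintype.card_fin,
              nsmul_eq_mul]
    have htot2 : x + ((n : ℝ) - 1) * (x / 2) ≤ c i (univ : Finset E) := by
      rw [← hci.partition_sum hA]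
      rw [← Finset.add_sum_erase _ _ (Finset.mem_univ i)]
      have h1 : ((n : ℝ) - 1) * (x / 2) ≤ ∑ j ∈ univ.erase i, c i (A j) := by
        have hcard' : (univ.erase i).card = n - 1 := by
          rw [Finset.card_erase_of_mem (Finset.mem_univ i), Finset.card_univ, Fintype.card_fin]
        have := Finset.card_nsmul_le_sum (univ.erase i) (fun j => c i (A j)) (x / 2)
          (fun j hj => hAj j (Finset.ne_of_mem_erase hj))
        rw [hcard', nsmul_eq_mul] at this
        have hcast : ((n - 1 : ℕ) : ℝ) = (n : ℝ) - 1 := by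
          have : 1 ≤ n := by omega
          push_cast [Nat.cast_sub this]
          ring
        rwa [hcast] at this
      linarith
    have hN : (2 : ℝ) ≤ (n : ℝ) := by exact_mod_cast hn
    have h3 : ((n : ℝ) + 1) * x ≤ 2 * (n : ℝ) * μ := by linarith
    calc x = (((n : ℝ) + 1) * x) / ((n : ℝ) + 1) := by field_simp
      _ ≤ (2 * (n : ℝ) * μ) / ((n : ℝ) + 1) := by
          exact div_le_div_of_nonneg_right h3 (by positivity)
      _ = 2 * (n : ℝ) / ((n : ℝ) + 1) * μ := by ring

noncomputable def bigC (n : ℕ) : ℝ := ((n:ℝ)+1)/((n:ℝ)+3)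
noncomputable def tinyC (n : ℕ) : ℝ := 2/((n:ℝ)+3)
noncomputable def wcost (n : ℕ) (e : Fin (2*n)) : ℝ := if e.val < n then bigC n else tinyC n
noncomputable def ccost (n : ℕ) : Fin n → Finset (Fin (2*n)) → ℝ :=
  fun i S => if i.val = 0 then ∑ e ∈ S, wcost n e else 0
def ownval (n e : ℕ) : ℕ := if e < 2 then 0 else if e < n then e else 1
def alloc (n : ℕ) : Fin n → Finset (Fin (2*n)) :=
  fun j => univ.filter (fun e => ownval n e.val = j.val)

section part2

variable {n : ℕ}

lemma bigC_nonneg : 0 ≤ bigC n := by unfold bigC; positivity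
lemma tinyC_nonneg : 0 ≤ tinyC n := by unfold tinyC; positivity
lemma wcost_nonneg (e : Fin (2*n)) : 0 ≤ wcost n e := by
  unfold wcost; split_ifs; exacts [bigC_nonneg, tinyC_nonneg]
lemma big_add_tiny : bigC n + tinyC n = 1 := by
  unfold bigC tinyC
  have h : ((n:ℝ)+3) ≠ 0 := by positivity
  field_simp
  ring

lemma wsum_nonneg (S : Finset (Fin (2*n))) : 0 ≤ ∑ e ∈ S, wcost n e :=
  Finset.sum_nonneg fun e _ => wcost_nonneg e

lemma ccost_nonneg (i : Fin n) (S : Finset (Fin (2*n))) : 0 ≤ ccost n i S := by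
  unfold ccost; split_ifs; exacts [wsum_nonneg S, le_refl 0]

lemma ccost_additive (i : Fin n) : AdditiveCost (ccost n i) := by
  refine ⟨ccost_nonneg i, fun S => ?_⟩
  by_cases h : i.val = 0 <;> simp [ccost, h]

lemma sum_split {M : Type*} [AddCommMonoid M] (f : ℕ → M) :
    ∑ e : Fin (2*n), f e.val
      = (∑ k ∈ Finset.range n, f k) + ∑ k ∈ Finset.Ico n (2*n), f k := by
  rw [Fin.sum_univ_eq_sum_range f (2*n), Finset.range_eq_Ico,
    ← Finset.sum_Ico_consecutive f (Nat.zero_le n) (by omega), ← Finset.range_eq_Ico]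

lemma total_w (hn : 5 ≤ n) : ∑ e : Fin (2*n), wcost n e = n := by
  have h2n : 2*n - n = n := by omega
  calc ∑ e : Fin (2*n), wcost n e
      = (∑ k ∈ Finset.range n, if k < n then bigC n else tinyC n)
        + ∑ k ∈ Finset.Ico n (2*n), if k < n then bigC n else tinyC n :=
        sum_split (fun k => if k < n then bigC n else tinyC n)
    _ = (∑ _k ∈ Finset.range n, bigC n) + ∑ _k ∈ Finset.Ico n (2*n), tinyC n := by
        congr 1
        · exact Finset.sum_congr rfl fun k hk => if_pos (Finset.mem_range.mp hk)
        · exact Finset.sum_congr rfl fun k hk =>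
            if_neg (by have := Finset.mem_Ico.mp hk; omega)
    _ = n * bigC n + n * tinyC n := by
        rw [Finset.sum_const, Finset.sum_const, Finset.card_range, Nat.card_Ico, h2n,
          nsmul_eq_mul, nsmul_eq_mul]
    _ = n := by rw [← mul_add, big_add_tiny, mul_one]

lemma card_tiny (hn : 5 ≤ n) :
    (univ.filter (fun e : Fin (2*n) => n ≤ e.val)).card = n := by
  rw [Finset.card_filter]
  calc ∑ e : Fin (2*n), (if n ≤ e.val then 1 else 0)
      = (∑ k ∈ Finset.range n, if n ≤ k then 1 else 0)
        + ∑ k ∈ Finset.Ico n (2*n), if n ≤ k then 1 else 0 :=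
        sum_split (fun k => if n ≤ k then 1 else 0)
    _ = (∑ _k ∈ Finset.range n, 0) + ∑ _k ∈ Finset.Ico n (2*n), 1 := by
        congr 1
        · exact Finset.sum_congr rfl fun k hk =>
            if_neg (by have := Finset.mem_range.mp hk; omega)
        · exact Finset.sum_congr rfl fun k hk =>
            if_pos (Finset.mem_Ico.mp hk).1
    _ = n := by simp [Nat.card_Ico]; omega

lemma alloc_0 (hn : 5 ≤ n) {i : Fin n} (hi : i.val = 0) :
    alloc n i = {(⟨0, by omega⟩ : Fin (2*n)), ⟨1, by omega⟩} := by
  ext e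
  have he := e.isLt
  simp only [alloc, Finset.mem_filter, Finset.mem_univ, true_and, Finset.mem_insert,
    Finset.mem_singleton, Fin.ext_iff, Fin.val_mk]
  unfold ownval
  split_ifs <;> omega

lemma alloc_1 (hn : 5 ≤ n) {i : Fin n} (hi : i.val = 1) :
    alloc n i = univ.filter (fun e => n ≤ e.val) := by
  ext e
  have he := e.isLt
  simp only [alloc, Finset.mem_filter, Finset.mem_univ, true_and]
  unfold ownval
  split_ifs <;> omega

lemma alloc_j (hn : 5 ≤ n) {i : Fin n} (hi : 2 ≤ i.val) :
    alloc n i = {(⟨i.val, by have := i.isLt; omega⟩ : Fin (2*n))} := by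
  ext e
  have he := e.isLt
  have hi2 := i.isLt
  simp only [alloc, Finset.mem_filter, Finset.mem_univ, true_and, Finset.mem_singleton,
    Fin.ext_iff, Fin.val_mk]
  unfold ownval
  split_ifs <;> omega

lemma alloc_partition (hn : 5 ≤ n) :
    IsPartitionOf (alloc n) (univ : Finset (Fin (2*n))) := by
  constructor
  · intro i j hij
    rw [Finset.disjoint_left]
    intro e hei hej
    simp only [alloc, Finset.mem_filter] at hei hej
    exact hij (Fin.ext (by omega))
  · ext e
    simp only [mem_biUnion, mem_univ, true_and, iff_true]
    have he := e.isLt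
    refine ⟨⟨ownval n e.val, ?_⟩, ?_⟩
    · unfold ownval; split_ifs <;> omega
    · simp [alloc]

lemma cost_A0 (hn : 5 ≤ n) {i : Fin n} (hi : i.val = 0) :
    ∑ e ∈ alloc n i, wcost n e = 2 * bigC n := by
  rw [alloc_0 hn hi]
  have hne : (⟨0, by omega⟩ : Fin (2*n)) ≠ ⟨1, by omega⟩ := by
    intro h
    have h2 := congrArg Fin.val h
    simp only [Fin.val_mk] at h2
    omega
  rw [Finset.sum_pair hne]
  have h0 : wcost n (⟨0, by omega⟩ : Fin (2*n)) = bigC n := by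
    unfold wcost
    rw [if_pos (by show (0:ℕ) < n; omega)]
  have h1 : wcost n (⟨1, by omega⟩ : Fin (2*n)) = bigC n := by
    unfold wcost
    rw [if_pos (by show (1:ℕ) < n; omega)]
  rw [h0, h1]
  ring

lemma mms_n_eq_one (hn : 5 ≤ n) {i : Fin n} (hi : i.val = 0) :
    MMS (ccost n i) n (univ : Finset (Fin (2*n))) = 1 := by
  have hn0 : 0 < n := by omega
  haveI : Nonempty (Fin n) := ⟨⟨0, hn0⟩⟩
  have hcc : ∀ S, ccost n i S = ∑ e ∈ S, wcost n e := fun S => by simp [ccost, hi]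
  apply le_antisymm
  · set T : Fin n → Finset (Fin (2*n)) :=
      fun k => {⟨k.val, by have := k.isLt; omega⟩, ⟨n + k.val, by have := k.isLt; omega⟩}
      with hTdef
    have hpart : IsPartitionOf T univ := by
      constructor
      · intro s t hst
        rw [Finset.disjoint_left]
        intro e hes het
        simp only [hTdef, Finset.mem_insert, Finset.mem_singleton, Fin.ext_iff, Fin.val_mk] at hes het
        have hs := s.isLt
        have ht := t.isLt
        exact hst (Fin.ext (by omega))
      · ext e
        simp only [mem_biUnion, mem_univ, true_and, iff_true]
        have he := e.isLt
        by_cases h : e.val < n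
        · exact ⟨⟨e.val, h⟩, by simp [hTdef, Fin.ext_iff]⟩
        · refine ⟨⟨e.val - n, by omega⟩, ?_⟩
          simp only [hTdef, Finset.mem_insert, Finset.mem_singleton, Fin.ext_iff, Fin.val_mk]
          right
          try simp only [Fin.val_mk]
          omega
    have hcost : ∀ k, ccost n i (T k) = 1 := by
      intro k
      rw [hcc]
      have hk := k.isLt
      have hne : (⟨k.val, by omega⟩ : Fin (2*n)) ≠ ⟨n + k.val, by omega⟩ := by
        intro h
        have h2 := congrArg Fin.val h
        simp only [Fin.val_mk] at h2
        omega
      rw [show T k = {(⟨k.val, by omega⟩ : Fin (2*n)), ⟨n + k.val, by omega⟩} from rfl]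
      rw [Finset.sum_pair hne]
      have h0 : wcost n (⟨k.val, by omega⟩ : Fin (2*n)) = bigC n := by
        unfold wcost
        rw [if_pos (by show k.val < n; omega)]
      have h1 : wcost n (⟨n + k.val, by omega⟩ : Fin (2*n)) = tinyC n := by
        unfold wcost
        rw [if_neg (by show ¬ (n + k.val < n); omega)]
      rw [h0, h1]
      exact big_add_tiny
    calc MMS (ccost n i) n univ ≤ ⨆ k, ccost n i (T k) :=
          mms_le_sup (ccost_nonneg i) hn0 hpart
      _ ≤ 1 := ciSup_le fun k => le_of_eq (hcost k)
  · apply le_mms hn0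
    intro T hT
    by_contra hcon
    push_neg at hcon
    have hlt : ∀ k, ccost n i (T k) < 1 := fun k =>
      lt_of_le_of_lt (le_ciSup (sup_bddAbove fun j => ccost n i (T j)) k) hcon
    have hsum := (ccost_additive i).partition_sum hT
    have htot : ccost n i (univ : Finset (Fin (2*n))) = n := by
      rw [hcc]; exact total_w hn
    have habs : (n:ℝ) < n := by
      calc (n:ℝ) = ccost n i univ := htot.symm
        _ = ∑ k, ccost n i (T k) := hsum.symm
        _ < ∑ _k : Fin n, (1:ℝ) :=
            Finset.sum_lt_sum_of_nonempty Finset.univ_nonempty (fun k _ => hlt k)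
        _ = n := by simp
    linarith

lemma pmms_holds (hodd : Odd n) (hn : 5 ≤ n) :
    ∀ i j : Fin n, i ≠ j →
      ccost n i (alloc n i) ≤ 1 * MMS (ccost n i) 2 (alloc n i ∪ alloc n j) := by
  intro i j hij
  rw [one_mul]
  by_cases hi : i.val = 0
  swap
  · have h0 : ccost n i (alloc n i) = 0 := by simp [ccost, hi]
    rw [h0]
    exact mms_nonneg (ccost_nonneg i) (by omega) _
  have hcc : ∀ S, ccost n i S = ∑ e ∈ S, wcost n e := fun S => by simp [ccost, hi]
  have hx : ccost n i (alloc n i) = 2 * bigC n := by rw [hcc]; exact cost_A0 hn hi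
  rw [hx]
  apply le_mms (by omega)
  intro T2 hpart
  set S' := alloc n i ∪ alloc n j with hS'
  have hmem : ∀ e ∈ S', e ∈ T2 0 ∨ e ∈ T2 1 := by
    intro e he
    have h1 : e ∈ univ.biUnion T2 := by rw [hpart.2]; exact he
    rw [mem_biUnion] at h1
    obtain ⟨t, _, ht⟩ := h1
    fin_cases t
    · exact Or.inl ht
    · exact Or.inr ht
  have hside : ∀ (t : Fin 2) (x y : Fin (2*n)), x ≠ y → x ∈ T2 t → y ∈ T2 t →
      x.val < n → y.val < n → 2 * bigC n ≤ ⨆ u : Fin 2, ccost n i (T2 u) := by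
    intro t x y hxy hxm hym hxn hyn
    have h1 : wcost n x + wcost n y ≤ ∑ e ∈ T2 t, wcost n e := by
      calc wcost n x + wcost n y = ∑ e ∈ ({x, y} : Finset (Fin (2*n))), wcost n e :=
            (Finset.sum_pair hxy).symm
        _ ≤ _ := Finset.sum_le_sum_of_subset_of_nonneg
            (by
              intro u hu
              rcases Finset.mem_insert.mp hu with h | h
              · subst h; exact hxm
              · rw [Finset.mem_singleton] at h; subst h; exact hym)
            (fun e _ _ => wcost_nonneg e)
    have hwx : wcost n x = bigC n := by unfold wcost; rw [if_pos hxn]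
    have hwy : wcost n y = bigC n := by unfold wcost; rw [if_pos hyn]
    calc 2 * bigC n = wcost n x + wcost n y := by rw [hwx, hwy]; ring
      _ ≤ ∑ e ∈ T2 t, wcost n e := h1
      _ = ccost n i (T2 t) := (hcc _).symm
      _ ≤ ⨆ u : Fin 2, ccost n i (T2 u) :=
          le_ciSup (sup_bddAbove fun u => ccost n i (T2 u)) t
  obtain ⟨z0, hz0v⟩ : ∃ z : Fin (2*n), z.val = 0 := ⟨⟨0, by omega⟩, rfl⟩
  obtain ⟨z1, hz1v⟩ : ∃ z : Fin (2*n), z.val = 1 := ⟨⟨1, by omega⟩, rfl⟩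
  have hz0n : z0.val < n := by omega
  have hz1n : z1.val < n := by omega
  have hne01 : z0 ≠ z1 := fun h => by
    rw [h] at hz0v
    omega
  have hz0S : z0 ∈ S' := by
    rw [hS', Finset.mem_union]
    left
    rw [alloc_0 hn hi]
    have : z0 = (⟨0, by omega⟩ : Fin (2*n)) := Fin.ext (by simp only [Fin.val_mk]; omega)
    rw [this]
    simp
  have hz1S : z1 ∈ S' := by
    rw [hS', Finset.mem_union]
    left
    rw [alloc_0 hn hi]
    have : z1 = (⟨1, by omega⟩ : Fin (2*n)) := Fin.ext (by simp only [Fin.val_mk]; omega)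
    rw [this]
    simp
  by_cases hj1 : j.val = 1
  · set Tiny := univ.filter (fun e : Fin (2*n) => n ≤ e.val) with hTiny
    have hTinyS : Tiny ⊆ S' := by
      rw [hS', alloc_1 hn hj1]
      exact Finset.subset_union_right
    have hcards : (T2 0 ∩ Tiny).card + (T2 1 ∩ Tiny).card = n := by
      have hdisj : Disjoint (T2 0 ∩ Tiny) (T2 1 ∩ Tiny) :=
        Finset.disjoint_of_subset_left Finset.inter_subset_left
          (Finset.disjoint_of_subset_right Finset.inter_subset_left
            (hpart.1 0 1 (by decide)))
      have hcover : (T2 0 ∩ Tiny) ∪ (T2 1 ∩ Tiny) = Tiny := by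
        ext e
        simp only [Finset.mem_union, Finset.mem_inter]
        constructor
        · rintro (⟨_, h⟩ | ⟨_, h⟩) <;> exact h
        · intro he
          rcases hmem e (hTinyS he) with h | h
          · exact Or.inl ⟨h, he⟩
          · exact Or.inr ⟨h, he⟩
      rw [← Finset.card_union_of_disjoint hdisj, hcover]
      exact card_tiny hn
    have hbigside : ∀ (t : Fin 2) (z : Fin (2*n)), z ∈ T2 t → z.val < n →
        n + 1 ≤ 2 * (T2 t ∩ Tiny).card → 2 * bigC n ≤ ⨆ u : Fin 2, ccost n i (T2 u) := by
      intro t z hz hzn hk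
      have hznotin : z ∉ T2 t ∩ Tiny := by
        intro h
        have h2 := (Finset.mem_inter.mp h).2
        rw [hTiny, Finset.mem_filter] at h2
        omega
      have h1 : wcost n z + ∑ e ∈ T2 t ∩ Tiny, wcost n e ≤ ∑ e ∈ T2 t, wcost n e := by
        rw [← Finset.sum_insert hznotin]
        apply Finset.sum_le_sum_of_subset_of_nonneg
        · intro u hu
          rcases Finset.mem_insert.mp hu with h | h
          · subst h; exact hz
          · exact (Finset.mem_inter.mp h).1
        · exact fun e _ _ => wcost_nonneg e
      have h2 : ∑ e ∈ T2 t ∩ Tiny, wcost n e = (T2 t ∩ Tiny).card * tinyC n := by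
        have hall : ∀ e ∈ T2 t ∩ Tiny, wcost n e = tinyC n := by
          intro e he
          have h3 := (Finset.mem_inter.mp he).2
          rw [hTiny, Finset.mem_filter] at h3
          unfold wcost
          rw [if_neg (by omega)]
        rw [Finset.sum_congr rfl hall, Finset.sum_const, nsmul_eq_mul]
      have hwz : wcost n z = bigC n := by unfold wcost; rw [if_pos hzn]
      have h3 : bigC n ≤ ((T2 t ∩ Tiny).card : ℝ) * tinyC n := by
        unfold bigC tinyC
        rw [mul_div_assoc']
        apply div_le_div_of_nonneg_right ?_ (by positivity)
        have : (n : ℝ) + 1 ≤ 2 * ((T2 t ∩ Tiny).card : ℝ) := by exact_mod_cast hk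
        linarith
      have h4 : bigC n ≤ ∑ e ∈ T2 t ∩ Tiny, wcost n e := by rw [h2]; exact h3
      calc 2 * bigC n = bigC n + bigC n := by ring
        _ ≤ wcost n z + ∑ e ∈ T2 t ∩ Tiny, wcost n e := add_le_add (le_of_eq hwz.symm) h4
        _ ≤ ∑ e ∈ T2 t, wcost n e := h1
        _ = ccost n i (T2 t) := (hcc _).symm
        _ ≤ ⨆ u : Fin 2, ccost n i (T2 u) :=
            le_ciSup (sup_bddAbove fun u => ccost n i (T2 u)) t
    obtain ⟨r, hr⟩ := hodd
    rcases hmem _ hz0S with h0 | h0 <;> rcases hmem _ hz1S with h1 | h1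
    · exact hside 0 z0 z1 hne01 h0 h1 hz0n hz1n
    · rcases (show n + 1 ≤ 2 * (T2 0 ∩ Tiny).card ∨ n + 1 ≤ 2 * (T2 1 ∩ Tiny).card
          by omega) with h | h
      · exact hbigside 0 z0 h0 hz0n h
      · exact hbigside 1 z1 h1 hz1n h
    · rcases (show n + 1 ≤ 2 * (T2 0 ∩ Tiny).card ∨ n + 1 ≤ 2 * (T2 1 ∩ Tiny).card
          by omega) with h | h
      · exact hbigside 0 z1 h1 hz1n h
      · exact hbigside 1 z0 h0 hz0n h
    · exact hside 1 z0 z1 hne01 h0 h1 hz0n hz1n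
  · have hj2 : 2 ≤ j.val := by
      have hj0 : j.val ≠ 0 := by
        intro h
        exact hij (Fin.ext (by omega))
      omega
    have hjn := j.isLt
    obtain ⟨zj, hzjv⟩ : ∃ z : Fin (2*n), z.val = j.val := ⟨⟨j.val, by omega⟩, rfl⟩
    have hzjn : zj.val < n := by omega
    have hne0j : z0 ≠ zj := fun h => by rw [h] at hz0v; omega
    have hne1j : z1 ≠ zj := fun h => by rw [h] at hz1v; omega
    have hzjS : zj ∈ S' := by
      rw [hS', Finset.mem_union]
      right
      rw [alloc_j hn hj2]
      have : zj = (⟨j.val, by omega⟩ : Fin (2*n)) := Fin.ext (by simp only [Fin.val_mk]; omega)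
      rw [this]
      simp
    rcases hmem _ hz0S with h0 | h0 <;> rcases hmem _ hz1S with h1 | h1 <;>
      rcases hmem _ hzjS with hjm | hjm
    · exact hside 0 z0 z1 hne01 h0 h1 hz0n hz1n
    · exact hside 0 z0 z1 hne01 h0 h1 hz0n hz1n
    · exact hside 0 z0 zj hne0j h0 hjm hz0n hzjn
    · exact hside 1 z1 zj hne1j h1 hjm hz1n hzjn
    · exact hside 0 z1 zj hne1j h1 hjm hz1n hzjn
    · exact hside 1 z0 zj hne0j h0 hjm hz0n hzjn
    · exact hside 1 z0 z1 hne01 h0 h1 hz0n hz1n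
    · exact hside 1 z0 z1 hne01 h0 h1 hz0n hz1n

end part2

theorem part2_main (n : ℕ) (hodd : Odd n) (hn5 : 5 ≤ n) (β : ℝ) (hβ1 : 1 ≤ β)
    (hβ : β < (2 * (n : ℝ) + 2) / ((n : ℝ) + 3)) :
    ∃ (m : ℕ) (c : Fin n → Finset (Fin m) → ℝ) (A : Fin n → Finset (Fin m)),
      (∀ i, AdditiveCost (c i)) ∧ IsPartitionOf A Finset.univ ∧
      (∀ i j, i ≠ j → c i (A i) ≤ 1 * MMS (c i) 2 (A i ∪ A j)) ∧
      ¬ (∀ i, c i (A i) ≤ β * MMS (c i) n Finset.univ) := by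
  refine ⟨2*n, ccost n, alloc n, ccost_additive, alloc_partition hn5,
    pmms_holds hodd hn5, ?_⟩
  intro hfair
  have h := hfair ⟨0, by omega⟩
  rw [mms_n_eq_one hn5 (show (⟨0, by omega⟩ : Fin n).val = 0 from rfl), mul_one] at h
  have hx : ccost n (⟨0, by omega⟩ : Fin n) (alloc n ⟨0, by omega⟩) = 2 * bigC n := by
    have : ccost n (⟨0, by omega⟩ : Fin n) (alloc n ⟨0, by omega⟩)
        = ∑ e ∈ alloc n (⟨0, by omega⟩ : Fin n), wcost n e := by simp [ccost]
    rw [this]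
    exact cost_A0 hn5 rfl
  rw [hx] at h
  have hbig : 2 * bigC n = (2*(n:ℝ)+2)/((n:ℝ)+3) := by unfold bigC; ring
  linarith

/-- Proposition 5.5: with additive cost functions, every PMMS allocation is
`2n/(n+1)`-MMS, and for odd `n ≥ 5` a PMMS allocation need not be `β`-MMS for any
`β < (2n+2)/(n+3)`. -/
theorem PMMS_MMS_general_bounds :
    (∀ (E : Type) [DecidableEq E] [Fintype E] (n : ℕ), 2 ≤ n →
      ∀ c : Fin n → Finset E → ℝ, (∀ i, AdditiveCost (c i)) →
      ∀ A : Fin n → Finset E, IsAllocation A → IsPMMS 1 c A →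
        IsMMSFair (2 * (n : ℝ) / ((n : ℝ) + 1)) c A) ∧
    (∀ n : ℕ, Odd n → 5 ≤ n → ∀ β : ℝ, 1 ≤ β → β < (2 * (n : ℝ) + 2) / ((n : ℝ) + 3) →
      ∃ (m : ℕ) (c : Fin n → Finset (Fin m) → ℝ) (A : Fin n → Finset (Fin m)),
        (∀ i, AdditiveCost (c i)) ∧ IsAllocation A ∧ IsPMMS 1 c A ∧
        ¬ IsMMSFair β c A) := by
  constructor
  · intro E _ _ n hn c hc A hA hP
    exact part1 hn c hc A hA hP
  · intro n hodd hn β hβ1 hβ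
    obtain ⟨m, c, A, h1, h2, h3, h4⟩ := part2_main n hodd hn β hβ1 hβ
    exact ⟨m, c, A, h1, h2, h3, h4⟩
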